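/- Let p be a prime, n a positive integer, and C_1 a self-orthogonal code of length n over Z_p of dimension k_1; when p = 2, assume further that C_1 is doubly even. Then the number of free self-orthogonal codes C ⊆ (Z_{p^2})^n such that π(C) = ι^{-1}(C) = C_1 is p^{k_1(2n−3k_1−1)/2} if p is odd, and 2^{k_1(2n−3k_1+1)/2} if p = 2. -/

import Mathlib

open scoped BigOperators

set_option maxHeartbeats 1000000

namespace Paper

/-- Self-orthogonality of a set of vectors w.r.t. the standard inner product. -/
def sorth {m : ℕ} {ι : Type} [Fintype ι] (S : Set (ι → ZMod m)) : Prop :=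
  ∀ x ∈ S, ∀ y ∈ S, ∑ i, x i * y i = 0

/-- The dual (as a set) of a set of vectors w.r.t. the standard inner product. -/
def dualSet {m : ℕ} {ι : Type} [Fintype ι] (S : Set (ι → ZMod m)) : Set (ι → ZMod m) :=
  {x | ∀ y ∈ S, ∑ i, x i * y i = 0}

/-- A set of vectors is doubly even if every element has Hamming weight divisible by 4. -/
def doublyEven {m : ℕ} {ι : Type} [Fintype ι] (S : Set (ι → ZMod m)) : Prop :=
  ∀ x ∈ S, 4 ∣ (Finset.univ.filter fun i => x i ≠ 0).card

/-- Coordinatewise reduction map `(Z_{p^2})^ι → (Z_p)^ι`. -/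
def res (p : ℕ) [Fact p.Prime] {ι : Type} (v : ι → ZMod (p ^ 2)) : ι → ZMod p :=
  fun i => ZMod.castHom (dvd_pow_self p (by norm_num)) (ZMod p) (v i)

/-- The injection `(Z_p)^ι → (Z_{p^2})^ι` induced by `Z_p ≅ pZ_{p^2} ⊆ Z_{p^2}`. -/
def iot (p : ℕ) {ι : Type} (v : ι → ZMod p) : ι → ZMod (p ^ 2) :=
  fun i => (p : ZMod (p ^ 2)) * (ZMod.cast (v i))

/-- Coordinatewise reduction map `(Z_4)^ι → (Z_2)^ι`. -/
def res4 {ι : Type} (v : ι → ZMod 4) : ι → ZMod 2 :=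
  fun i => ZMod.castHom (by norm_num : (2:ℕ) ∣ 4) (ZMod 2) (v i)

/-- The injection `(Z_2)^ι → (Z_4)^ι`. -/
def iot4 {ι : Type} (v : ι → ZMod 2) : ι → ZMod 4 :=
  fun i => (2 : ZMod 4) * (ZMod.cast (v i))

/-- Euclidean weight on `Z_4`. -/
def ewt (x : ZMod 4) : ℕ := if x = 0 then 0 else if x = 2 then 4 else 1

/-- A quaternary code is even if every codeword has Euclidean weight divisible by 8. -/
def evenCode {ι : Type} [Fintype ι] (S : Set (ι → ZMod 4)) : Prop :=
  ∀ x ∈ S, 8 ∣ ∑ i, ewt (x i)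

/-- The code over `Z_q` generated by the rows of an integer matrix. -/
def intRowSpan (q : ℕ) {κ ι : Type} (G : Matrix κ ι ℤ) :
    Submodule (ZMod q) (ι → ZMod q) :=
  Submodule.span (ZMod q) (Set.range fun i => fun c => ((G i c : ℤ) : ZMod q))

/-- The Gaussian binomial coefficient `[n choose k]_p`. -/
def gauss (p n k : ℕ) : ℚ :=
  ∏ i ∈ Finset.range k, ((p : ℚ) ^ n - (p : ℚ) ^ i) / ((p : ℚ) ^ k - (p : ℚ) ^ i)

variable (p : ℕ) [Fact p.Prime]

noncomputable abbrev rh : ZMod (p^2) →+* ZMod p := ZMod.castHom (dvd_pow_self p (by norm_num)) (ZMod p)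

noncomputable def phi (x : ZMod p) : ZMod (p^2) := (p : ZMod (p^2)) * (ZMod.cast x)

lemma hp1 : 1 < p := (Fact.out : p.Prime).one_lt

instance : NeZero p := ⟨(Fact.out : p.Prime).ne_zero⟩

lemma cast_val (x : ZMod p) : (ZMod.cast x : ZMod (p^2)) = ((x.val : ℕ) : ZMod (p^2)) := by
  rw [ZMod.natCast_val]

lemma natCast_pmul_congr {a b : ℕ} (h : (a : ZMod p) = b) :
    ((p * a : ℕ) : ZMod (p^2)) = ((p * b : ℕ) : ZMod (p^2)) := by
  rw [ZMod.natCast_eq_natCast_iff] at h ⊢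
  have := h.mul_left' (c := p)
  simpa [pow_two] using this

lemma phi_def (x : ZMod p) : phi p x = ((p * x.val : ℕ) : ZMod (p^2)) := by
  rw [phi, cast_val]; push_cast; ring

lemma val_natCast_eq_self (x : ZMod p) : ((x.val : ℕ) : ZMod p) = x := by
  rw [ZMod.natCast_val, ZMod.cast_id]

lemma phi_add (x y : ZMod p) : phi p (x + y) = phi p x + phi p y := by
  rw [phi_def, phi_def, phi_def]
  have h : (((x+y).val : ℕ) : ZMod p) = ((x.val + y.val : ℕ) : ZMod p) := by
    push_cast [val_natCast_eq_self]; ring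
  rw [natCast_pmul_congr p h]; push_cast; ring

lemma phi_mul (x y : ZMod p) : phi p (x * y) = phi p x * (ZMod.cast y : ZMod (p^2)) := by
  rw [phi_def, phi_def, cast_val]
  have h : (((x*y).val : ℕ) : ZMod p) = ((x.val * y.val : ℕ) : ZMod p) := by
    push_cast [val_natCast_eq_self]; ring
  rw [natCast_pmul_congr p h]; push_cast; ring

lemma phi_zero : phi p 0 = 0 := by simp [phi]

lemma phi_eq_zero_iff (x : ZMod p) : phi p x = 0 ↔ x = 0 := by
  constructor
  · intro h
    rw [phi_def, ZMod.natCast_eq_zero_iff, pow_two] at h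
    have hp0 : (p:ℕ) ≠ 0 := (Fact.out : p.Prime).ne_zero
    have hd : p ∣ x.val := (mul_dvd_mul_iff_left hp0).mp h
    have hv : x.val < p := ZMod.val_lt x
    have h0 : x.val = 0 := Nat.eq_zero_of_dvd_of_lt hd hv
    exact (ZMod.val_eq_zero x).mp h0
  · rintro rfl; exact phi_zero p

lemma phi_inj : Function.Injective (phi p) := by
  intro x y h
  have hs : phi p (x - y) + phi p y = phi p x := by
    rw [← phi_add]; ring_nf
  have h0 : phi p (x - y) = 0 := by
    rw [h] at hs
    exact add_right_cancel (b := phi p y) (by rw [hs, zero_add])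
  have := (phi_eq_zero_iff p _).mp h0
  exact sub_eq_zero.mp this

lemma rh_cast (x : ZMod p) : rh p (ZMod.cast x) = x := by
  rw [cast_val, map_natCast, val_natCast_eq_self]

lemma rh_phi (x : ZMod p) : rh p (phi p x) = 0 := by
  rw [phi, map_mul, map_natCast, ZMod.natCast_self, zero_mul]

lemma exists_phi_of_rh_eq_zero {z : ZMod (p^2)} (h : rh p z = 0) : ∃ x, z = phi p x := by
  have hz : ((z.val : ℕ) : ZMod (p^2)) = z := by
    rw [ZMod.natCast_val, ZMod.cast_id]
  have h2 : ((z.val : ℕ) : ZMod p) = 0 := by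
    have : rh p ((z.val : ℕ) : ZMod (p^2)) = 0 := by rw [hz]; exact h
    rwa [map_natCast] at this
  rw [ZMod.natCast_eq_zero_iff] at h2
  obtain ⟨m, hm⟩ := h2
  refine ⟨(m : ZMod p), ?_⟩
  rw [phi_def]
  have h3 : ((((m : ZMod p)).val : ℕ) : ZMod p) = (m : ℕ) := by rw [val_natCast_eq_self]
  rw [natCast_pmul_congr p h3, ← hm, hz]

noncomputable def phiH : ZMod p →+ ZMod (p^2) := AddMonoidHom.mk' (phi p) (phi_add p)

lemma phi_sum {ι : Type} (s : Finset ι) (f : ι → ZMod p) :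
    phi p (∑ i ∈ s, f i) = ∑ i ∈ s, phi p (f i) := map_sum (phiH p) f s

lemma pp0 : (p : ZMod (p^2)) * (p : ZMod (p^2)) = 0 := by
  have : ((p^2 : ℕ) : ZMod (p^2)) = 0 := ZMod.natCast_self _
  push_cast at this
  linear_combination this

section Vec
variable {ι : Type} [Fintype ι]

def dot {m : ℕ} (x y : ι → ZMod m) : ZMod m := ∑ i, x i * y i

lemma dot_comm {m : ℕ} (x y : ι → ZMod m) : dot x y = dot y x := by
  unfold dot; congr 1; funext i; ring

noncomputable def lift1 (v : ι → ZMod p) : ι → ZMod (p^2) := fun t => ZMod.cast (v t)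

lemma iot_eq_phi (v : ι → ZMod p) : iot p v = fun t => phi p (v t) := rfl

lemma res_lift1 (v : ι → ZMod p) : res p (lift1 p v) = v := by
  funext t; exact rh_cast p (v t)

lemma res_iot (v : ι → ZMod p) : res p (iot p v) = 0 := by
  funext t; exact rh_phi p (v t)

lemma res_add (x y : ι → ZMod (p^2)) : res p (x + y) = res p x + res p y := by
  funext t; exact map_add (rh p) _ _

lemma res_sub (x y : ι → ZMod (p^2)) : res p (x - y) = res p x - res p y := by
  funext t; exact map_sub (rh p) _ _

lemma res_smul (c : ZMod (p^2)) (x : ι → ZMod (p^2)) : res p (c • x) = rh p c • res p x := by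
  funext t; exact map_mul (rh p) _ _

lemma res_dot (x y : ι → ZMod (p^2)) : rh p (dot x y) = dot (res p x) (res p y) := by
  unfold dot; rw [map_sum]
  refine Finset.sum_congr rfl fun t _ => ?_
  rw [map_mul]; rfl

lemma iot_add (u v : ι → ZMod p) : iot p (u + v) = iot p u + iot p v := by
  funext t; exact phi_add p _ _

lemma iot_sub (u v : ι → ZMod p) : iot p (u - v) = iot p u - iot p v := by
  funext t
  have h : phi p (u t - v t) + phi p (v t) = phi p (u t) := by rw [← phi_add]; ring_nf
  show phi p (u t - v t) = phi p (u t) - phi p (v t)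
  linear_combination h

lemma iot_smul (c : ZMod p) (v : ι → ZMod p) :
    iot p (c • v) = (ZMod.cast c : ZMod (p^2)) • iot p v := by
  funext t
  show phi p (c * v t) = ZMod.cast c * phi p (v t)
  rw [mul_comm c (v t), phi_mul]; ring

lemma iot_inj : Function.Injective (iot p (ι := ι)) := by
  intro u v h
  funext t
  exact phi_inj p (congrFun h t)

lemma exists_iot_of_res_eq_zero {x : ι → ZMod (p^2)} (h : res p x = 0) :
    ∃ v, x = iot p v := by
  have hc : ∀ t, ∃ w, x t = phi p w := fun t => exists_phi_of_rh_eq_zero p (congrFun h t)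
  exact ⟨fun t => Classical.choose (hc t), funext fun t => Classical.choose_spec (hc t)⟩

lemma dot_lift1_iot (u : ι → ZMod p) (a : ι → ZMod p) :
    dot (lift1 p u) (iot p a) = phi p (dot a u) := by
  unfold dot
  rw [phi_sum]
  congr 1; funext t
  show ZMod.cast (u t) * phi p (a t) = phi p (a t * u t)
  rw [phi_mul]; ring

lemma dot_iot_lift1 (a u : ι → ZMod p) :
    dot (iot p a) (lift1 p u) = phi p (dot a u) := by
  rw [dot_comm]; exact dot_lift1_iot p u a

lemma dot_iot_iot (a b : ι → ZMod p) : dot (iot p a) (iot p b) = 0 := by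
  unfold dot
  apply Finset.sum_eq_zero
  intro t _
  show ((p:ZMod (p^2)) * _) * ((p:ZMod (p^2)) * _) = 0
  rw [show ((p:ZMod (p^2)) * ZMod.cast (a t)) * ((p:ZMod (p^2)) * ZMod.cast (b t)) = ((p:ZMod (p^2)) * (p:ZMod (p^2))) * (ZMod.cast (a t) * ZMod.cast (b t)) by ring, pp0, zero_mul]

lemma dot_sum_left {m : ℕ} {κ : Type} [Fintype κ] (c : κ → ZMod m) (v : κ → ι → ZMod m) (y : ι → ZMod m) :
    dot (∑ i, c i • v i) y = ∑ i, c i * dot (v i) y := by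
  unfold dot
  simp only [Finset.sum_apply, Pi.smul_apply, smul_eq_mul, Finset.sum_mul, Finset.mul_sum, mul_assoc]
  exact Finset.sum_comm

lemma dot_sum_right {m : ℕ} {κ : Type} [Fintype κ] (c : κ → ZMod m) (v : κ → ι → ZMod m) (y : ι → ZMod m) :
    dot y (∑ i, c i • v i) = ∑ i, c i * dot y (v i) := by
  rw [dot_comm, dot_sum_left]
  congr 1; funext i; rw [dot_comm]

end Vec

section Hom
variable (p : ℕ) [Fact p.Prime] {ι : Type} [Fintype ι]

noncomputable def resH : (ι → ZMod (p^2)) →+ (ι → ZMod p) := AddMonoidHom.mk' (res p) (res_add p)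

noncomputable def iotH : (ι → ZMod p) →+ (ι → ZMod (p^2)) := AddMonoidHom.mk' (iot p) (iot_add p)

lemma dot_add_left {m : ℕ} (x y z : ι → ZMod m) : dot (x + y) z = dot x z + dot y z := by
  unfold dot; rw [← Finset.sum_add_distrib]; congr 1; funext t; simp [add_mul]

lemma dot_add_right {m : ℕ} (x y z : ι → ZMod m) : dot x (y + z) = dot x y + dot x z := by
  rw [dot_comm, dot_add_left, dot_comm y x, dot_comm z x]

lemma dot_smul_left {m : ℕ} (c : ZMod m) (x y : ι → ZMod m) : dot (c • x) y = c * dot x y := by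
  unfold dot
  rw [Finset.mul_sum]
  congr 1; funext t
  simp [mul_assoc]

lemma dot_sub_left {m : ℕ} (x y z : ι → ZMod m) : dot (x - y) z = dot x z - dot y z := by
  unfold dot
  rw [← Finset.sum_sub_distrib]
  congr 1; funext t
  simp [sub_mul]

end Hom

section Main
variable {p : ℕ} [Fact p.Prime] {n k : ℕ}

variable (g : Fin k → Fin n → ZMod p)

noncomputable def gen (A : Fin k → Fin n → ZMod p) (i : Fin k) : Fin n → ZMod (p^2) :=
  lift1 p (g i) + iot p (A i)

noncomputable def codeOf (A : Fin k → Fin n → ZMod p) : Submodule (ZMod (p^2)) (Fin n → ZMod (p^2)) :=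
  Submodule.span _ (Set.range (gen g A))

lemma mem_codeOf {A : Fin k → Fin n → ZMod p} {x : Fin n → ZMod (p^2)} :
    x ∈ codeOf g A ↔ ∃ c : Fin k → ZMod (p^2), ∑ i, c i • gen g A i = x :=
  Submodule.mem_span_range_iff_exists_fun _

lemma res_gen (A : Fin k → Fin n → ZMod p) (i : Fin k) : res p (gen g A i) = g i := by
  unfold gen
  rw [res_add, res_lift1, res_iot, add_zero]

lemma res_sum (c : Fin k → ZMod (p^2)) (v : Fin k → Fin n → ZMod (p^2)) :
    res p (∑ i, c i • v i) = ∑ i, rh p (c i) • res p (v i) := by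
  rw [show res p (∑ i, c i • v i) = resH p (∑ i, c i • v i) from rfl, map_sum]
  congr 1; funext i
  show res p _ = _
  rw [res_smul]

lemma iot_sum (c : Fin k → ZMod p) (v : Fin k → Fin n → ZMod p) :
    iot p (∑ i, c i • v i) = ∑ i, (ZMod.cast (c i) : ZMod (p^2)) • iot p (v i) := by
  rw [show iot p (∑ i, c i • v i) = iotH p (∑ i, c i • v i) from rfl, map_sum]
  congr 1; funext i
  show iot p _ = _
  rw [iot_smul]

lemma pgen (A : Fin k → Fin n → ZMod p) (i : Fin k) :
    (p : ZMod (p^2)) • gen g A i = iot p (g i) := by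
  funext t
  show (p : ZMod (p^2)) * (ZMod.cast (g i t) + (p : ZMod (p^2)) * ZMod.cast (A i t)) = (p : ZMod (p^2)) * ZMod.cast (g i t)
  have := pp0 p
  linear_combination ZMod.cast (A i t) * this + this * 0

variable {C1 : Submodule (ZMod p) (Fin n → ZMod p)}
  (hspan : Submodule.span (ZMod p) (Set.range g) = C1)

include hspan

lemma mem_C1_iff {x : Fin n → ZMod p} :
    x ∈ C1 ↔ ∃ c : Fin k → ZMod p, ∑ i, c i • g i = x := by
  rw [← hspan]; exact Submodule.mem_span_range_iff_exists_fun _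

lemma g_mem_C1 (i : Fin k) : g i ∈ C1 := by
  rw [← hspan]; exact Submodule.subset_span ⟨i, rfl⟩

lemma iot_mem_codeOf (A : Fin k → Fin n → ZMod p) {v : Fin n → ZMod p} (hv : v ∈ C1) :
    iot p v ∈ codeOf g A := by
  obtain ⟨c, rfl⟩ := (mem_C1_iff g hspan).mp hv
  rw [iot_sum]
  apply Submodule.sum_mem
  intro i _
  rw [← pgen g A i, smul_smul]
  exact Submodule.smul_mem _ _ (Submodule.subset_span ⟨i, rfl⟩)

lemma res_image (A : Fin k → Fin n → ZMod p) :
    res p '' (codeOf g A : Set (Fin n → ZMod (p^2))) = (C1 : Set (Fin n → ZMod p)) := by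
  ext x
  constructor
  · rintro ⟨y, hy, rfl⟩
    obtain ⟨c, rfl⟩ := (mem_codeOf g).mp hy
    rw [res_sum]
    simp only [res_gen]
    apply Submodule.sum_mem
    intro i _
    exact Submodule.smul_mem _ _ (g_mem_C1 g hspan i)
  · intro hx
    obtain ⟨c, rfl⟩ := (mem_C1_iff g hspan).mp hx
    refine ⟨∑ i, (ZMod.cast (c i) : ZMod (p^2)) • gen g A i, ?_, ?_⟩
    · exact Submodule.sum_mem _ fun i _ => Submodule.smul_mem _ _ (Submodule.subset_span ⟨i, rfl⟩)
    · rw [res_sum]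
      congr 1; funext i
      rw [res_gen, rh_cast]
end Main

section Main2
variable {p : ℕ} [Fact p.Prime] {n k : ℕ}
variable (g : Fin k → Fin n → ZMod p)
variable {C1 : Submodule (ZMod p) (Fin n → ZMod p)}
  (hspan : Submodule.span (ZMod p) (Set.range g) = C1)
  (hgi : LinearIndependent (ZMod p) g)

lemma coeff_unique (hgi : LinearIndependent (ZMod p) g) {c d : Fin k → ZMod p}
    (h : ∑ i, c i • g i = ∑ i, d i • g i) : c = d := by
  have h2 : ∑ i, (c - d) i • g i = 0 := by
    simp only [Pi.sub_apply, sub_smul, Finset.sum_sub_distrib, h, sub_self]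
  have := Fintype.linearIndependent_iff.mp hgi (c - d) h2
  funext i
  have := this i
  simp only [Pi.sub_apply] at this
  exact sub_eq_zero.mp this

include hspan hgi in
lemma iot_preimage (A : Fin k → Fin n → ZMod p) :
    iot p ⁻¹' (codeOf g A : Set (Fin n → ZMod (p^2))) = (C1 : Set (Fin n → ZMod p)) := by
  ext v
  simp only [Set.mem_preimage, SetLike.mem_coe]
  constructor
  · intro hv
    obtain ⟨c, hc⟩ := (mem_codeOf g).mp hv
    have h0 : ∑ i, rh p (c i) • g i = 0 := by
      have h1 := congrArg (res p) hc
      rw [res_sum, res_iot] at h1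
      simp only [res_gen] at h1
      exact h1
    have hcz : ∀ i, rh p (c i) = 0 := Fintype.linearIndependent_iff.mp hgi _ h0
    choose d hd using fun i => exists_phi_of_rh_eq_zero p (hcz i)
    have hiv : iot p v = iot p (∑ i, d i • g i) := by
      rw [iot_sum, ← hc]
      congr 1; funext i
      rw [hd i, ← pgen g A i, smul_smul]
      congr 1
      show phi p (d i) = ZMod.cast (d i) * (p : ZMod (p^2))
      rw [phi]; ring
    rw [iot_inj p hiv]
    exact Submodule.sum_mem _ fun i _ => Submodule.smul_mem _ _ (g_mem_C1 g hspan i)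
  · exact fun hv => iot_mem_codeOf g hspan A hv

lemma sorth_iff_gen (A : Fin k → Fin n → ZMod p) :
    sorth (codeOf g A : Set (Fin n → ZMod (p^2))) ↔ ∀ i j, dot (gen g A i) (gen g A j) = 0 := by
  constructor
  · intro h i j
    exact h _ (Submodule.subset_span ⟨i, rfl⟩) _ (Submodule.subset_span ⟨j, rfl⟩)
  · intro h x hx y hy
    obtain ⟨c, rfl⟩ := (mem_codeOf g).mp hx
    obtain ⟨d, rfl⟩ := (mem_codeOf g).mp hy
    show dot _ _ = 0
    rw [dot_sum_left]
    apply Finset.sum_eq_zero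
    intro i _
    rw [dot_sum_right]
    rw [Finset.sum_eq_zero, mul_zero]
    intro j _
    rw [h i j, mul_zero]

include hspan in
lemma dlift_ex (hso : sorth (C1 : Set (Fin n → ZMod p))) (i j : Fin k) :
    ∃ s, dot (lift1 p (g i)) (lift1 p (g j)) = phi p s := by
  apply exists_phi_of_rh_eq_zero
  rw [res_dot, res_lift1, res_lift1]
  exact hso _ (g_mem_C1 g hspan i) _ (g_mem_C1 g hspan j)

noncomputable def Smat (hspan : Submodule.span (ZMod p) (Set.range g) = C1)
    (hso : sorth (C1 : Set (Fin n → ZMod p))) (i j : Fin k) : ZMod p :=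
  Classical.choose (dlift_ex g hspan hso i j)

lemma Smat_spec (hso : sorth (C1 : Set (Fin n → ZMod p))) (i j : Fin k) :
    dot (lift1 p (g i)) (lift1 p (g j)) = phi p (Smat g hspan hso i j) :=
  Classical.choose_spec (dlift_ex g hspan hso i j)

lemma Smat_symm (hso : sorth (C1 : Set (Fin n → ZMod p))) (i j : Fin k) :
    Smat g hspan hso i j = Smat g hspan hso j i := by
  apply phi_inj p
  rw [← Smat_spec g hspan hso, ← Smat_spec g hspan hso, dot_comm]

lemma gen_dot (hso : sorth (C1 : Set (Fin n → ZMod p))) (A : Fin k → Fin n → ZMod p) (i j : Fin k) :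
    dot (gen g A i) (gen g A j)
      = phi p (Smat g hspan hso i j + (dot (A i) (g j) + dot (A j) (g i))) := by
  unfold gen
  rw [dot_add_left, dot_add_right, dot_add_right, dot_lift1_iot, dot_iot_lift1, dot_iot_iot,
    add_zero, Smat_spec g hspan hso, phi_add, phi_add]
  ring

def cond (hspan : Submodule.span (ZMod p) (Set.range g) = C1)
    (hso : sorth (C1 : Set (Fin n → ZMod p))) (A : Fin k → Fin n → ZMod p) : Prop :=
  ∀ i j, Smat g hspan hso i j + (dot (A i) (g j) + dot (A j) (g i)) = 0

lemma sorth_codeOf_iff (hso : sorth (C1 : Set (Fin n → ZMod p))) (A : Fin k → Fin n → ZMod p) :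
    sorth (codeOf g A : Set (Fin n → ZMod (p^2))) ↔ cond g hspan hso A := by
  rw [sorth_iff_gen]
  unfold cond
  constructor
  · intro h i j
    have := h i j
    rw [gen_dot g hspan hso] at this
    exact (phi_eq_zero_iff p _).mp this
  · intro h i j
    rw [gen_dot g hspan hso, h i j, phi_zero]

end Main2

section Main3
variable {p : ℕ} [Fact p.Prime] {n k : ℕ}
variable (g : Fin k → Fin n → ZMod p)
variable {C1 : Submodule (ZMod p) (Fin n → ZMod p)}
  (hspan : Submodule.span (ZMod p) (Set.range g) = C1)
  (hgi : LinearIndependent (ZMod p) g)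

lemma sum_phi_smul_gen (A : Fin k → Fin n → ZMod p) (d : Fin k → ZMod p) :
    ∑ j, phi p (d j) • gen g A j = iot p (∑ j, d j • g j) := by
  rw [iot_sum]
  congr 1; funext j
  rw [← pgen g A j, smul_smul]
  congr 1
  show phi p (d j) = ZMod.cast (d j) * (p : ZMod (p^2))
  rw [phi]; ring

lemma gen_sub_gen (A A' : Fin k → Fin n → ZMod p) (i : Fin k) :
    gen g A' i - gen g A i = iot p (A' i - A i) := by
  unfold gen
  rw [iot_sub]
  abel

include hspan in
lemma codeOf_eq_of_sub_mem {A A' : Fin k → Fin n → ZMod p}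
    (h : ∀ i, A' i - A i ∈ C1) : codeOf g A' = codeOf g A := by
  have key : ∀ (B B' : Fin k → Fin n → ZMod p), (∀ i, B' i - B i ∈ C1) →
      codeOf g B' ≤ codeOf g B := by
    intro B B' hB
    rw [codeOf, Submodule.span_le]
    rintro _ ⟨i, rfl⟩
    have : gen g B' i = gen g B i + iot p (B' i - B i) := by
      rw [← gen_sub_gen]; abel
    rw [SetLike.mem_coe, this]
    exact add_mem (Submodule.subset_span ⟨i, rfl⟩) (iot_mem_codeOf g hspan B (hB i))
  refine le_antisymm (key A A' h) (key A' A fun i => ?_)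
  have := neg_mem (h i)
  simpa using this

include hspan hgi in
lemma sub_mem_of_codeOf_eq {A A' : Fin k → Fin n → ZMod p}
    (h : codeOf g A = codeOf g A') (i : Fin k) : A' i - A i ∈ C1 := by
  classical
  have hmem : gen g A' i ∈ codeOf g A := by
    rw [h]; exact Submodule.subset_span ⟨i, rfl⟩
  obtain ⟨c, hc⟩ := (mem_codeOf g).mp hmem
  have hres : ∑ j, rh p (c j) • g j = g i := by
    have h1 := congrArg (res p) hc
    rw [res_sum] at h1
    simp only [res_gen] at h1
    exact h1
  have hdelta : ∀ j, rh p (c j) = (if j = i then 1 else 0) := by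
    have h2 : ∑ j, (fun j => rh p (c j)) j • g j = ∑ j, (fun j => (if j = i then (1:ZMod p) else 0)) j • g j := by
      rw [hres]
      symm
      simp [ite_smul]
    exact congrFun (coeff_unique g hgi h2)
  have hez : ∀ j, rh p (c j - (if j = i then 1 else 0)) = 0 := by
    intro j
    rw [map_sub, hdelta j]
    have : rh p ((if j = i then (1:ZMod (p^2)) else 0)) = (if j = i then (1:ZMod p) else 0) := by
      by_cases hj : j = i
      · simp only [hj, if_true]; exact map_one (rh p)
      · simp only [hj, if_false]; exact map_zero (rh p)
    rw [this, sub_self]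
  choose d hd using fun j => exists_phi_of_rh_eq_zero p (hez j)
  have hx : iot p (A' i - A i) = iot p (∑ j, d j • g j) := by
    rw [← sum_phi_smul_gen, ← gen_sub_gen, ← hc]
    have : ∀ j, phi p (d j) = c j - (if j = i then 1 else 0) := fun j => (hd j).symm
    calc ∑ j, c j • gen g A j - gen g A i
        = ∑ j, (c j - (if j = i then 1 else 0)) • gen g A j := by
          simp only [sub_smul, Finset.sum_sub_distrib]
          congr 1
          simp [ite_smul]
      _ = ∑ j, phi p (d j) • gen g A j := by
          exact Finset.sum_congr rfl fun j _ => by rw [this j]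
  rw [iot_inj p hx]
  exact Submodule.sum_mem _ fun j _ => Submodule.smul_mem _ _ (g_mem_C1 g hspan j)

include hspan hgi in
lemma exists_param {C : Submodule (ZMod (p^2)) (Fin n → ZMod (p^2))}
    (hres : res p '' (C : Set (Fin n → ZMod (p^2))) = (C1 : Set (Fin n → ZMod p)))
    (htor : iot p ⁻¹' (C : Set (Fin n → ZMod (p^2))) = (C1 : Set (Fin n → ZMod p))) :
    ∃ A, codeOf g A = C := by
  have hg : ∀ i, ∃ y, y ∈ C ∧ res p y = g i := by
    intro i
    have : g i ∈ res p '' (C : Set (Fin n → ZMod (p^2))) := by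
      rw [hres]; exact g_mem_C1 g hspan i
    obtain ⟨y, hy, hyr⟩ := this
    exact ⟨y, hy, hyr⟩
  choose y hyC hyr using hg
  have hA : ∀ i, ∃ a, y i - lift1 p (g i) = iot p a := by
    intro i
    apply exists_iot_of_res_eq_zero
    rw [res_sub, hyr, res_lift1, sub_self]
  choose A hA using hA
  have hgen : ∀ i, gen g A i = y i := by
    intro i
    unfold gen
    rw [← hA i]
    abel
  refine ⟨A, le_antisymm ?_ ?_⟩
  · rw [codeOf, Submodule.span_le]
    rintro _ ⟨i, rfl⟩
    rw [SetLike.mem_coe, hgen]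
    exact hyC i
  · intro x hx
    have hrx : res p x ∈ C1 := by
      have : res p x ∈ res p '' (C : Set (Fin n → ZMod (p^2))) := ⟨x, hx, rfl⟩
      rwa [hres] at this
    obtain ⟨u, hu⟩ := (mem_C1_iff g hspan).mp hrx
    have hsummem : (∑ i, (ZMod.cast (u i) : ZMod (p^2)) • gen g A i) ∈ codeOf g A :=
      Submodule.sum_mem _ fun i _ => Submodule.smul_mem _ _ (Submodule.subset_span ⟨i, rfl⟩)
    have hx'C : x - ∑ i, (ZMod.cast (u i) : ZMod (p^2)) • gen g A i ∈ C := by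
      apply sub_mem hx
      apply Submodule.sum_mem
      intro i _
      apply Submodule.smul_mem
      rw [hgen]
      exact hyC i
    have hres0 : res p (x - ∑ i, (ZMod.cast (u i) : ZMod (p^2)) • gen g A i) = 0 := by
      rw [res_sub, res_sum]
      simp only [res_gen, rh_cast]
      rw [hu, sub_self]
    obtain ⟨w, hw⟩ := exists_iot_of_res_eq_zero p hres0
    have hwC1 : w ∈ C1 := by
      have : iot p w ∈ (C : Set (Fin n → ZMod (p^2))) := by rw [← hw]; exact hx'C
      rw [← SetLike.mem_coe, ← htor]
      exact this
    have hx'code : x - ∑ i, (ZMod.cast (u i) : ZMod (p^2)) • gen g A i ∈ codeOf g A := by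
      rw [hw]
      exact iot_mem_codeOf g hspan A hwC1
    have : x = (x - ∑ i, (ZMod.cast (u i) : ZMod (p^2)) • gen g A i) + ∑ i, (ZMod.cast (u i) : ZMod (p^2)) • gen g A i := by abel
    rw [this]
    exact add_mem hx'code hsummem

end Main3

section Card
variable (p : ℕ) [Fact p.Prime]

lemma card_eq_pow_finrank {M : Type} [AddCommGroup M] [Module (ZMod p) M]
    [Module.Finite (ZMod p) M] [Module.Free (ZMod p) M] :
    Nat.card M = p ^ (Module.finrank (ZMod p) M) := by
  classical
  have b := Module.finBasis (ZMod p) M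
  rw [Nat.card_congr b.equivFun.toEquiv, Nat.card_eq_fintype_card, Fintype.card_fun]
  simp [ZMod.card]

end Card

section Surj
variable {p : ℕ} [Fact p.Prime] {n k : ℕ}

/-- The pairing map `v ↦ dot v ·` as a linear map into the dual. -/
noncomputable def eDual (p : ℕ) [Fact p.Prime] (m : ℕ) :
    (Fin m → ZMod p) →ₗ[ZMod p] Module.Dual (ZMod p) (Fin m → ZMod p) where
  toFun v := ∑ i, v i • LinearMap.proj i
  map_add' u v := by
    simp only [Pi.add_apply, add_smul, Finset.sum_add_distrib]
  map_smul' c v := by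
    simp only [Pi.smul_apply, smul_eq_mul, RingHom.id_apply, Finset.smul_sum, smul_smul]

lemma eDual_apply {m : ℕ} (v w : Fin m → ZMod p) : eDual p m v w = dot v w := by
  show (∑ i, v i • LinearMap.proj i) w = _
  rw [LinearMap.sum_apply]
  unfold dot
  congr 1

lemma eDual_bij (m : ℕ) : Function.Bijective (eDual p m) := by
  have hinj : Function.Injective (eDual p m) := by
    rw [← LinearMap.ker_eq_bot, LinearMap.ker_eq_bot']
    intro v hv
    funext t
    have := congrArg (fun φ => φ (Pi.single t 1)) hv
    simp only [LinearMap.zero_apply] at this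
    rw [eDual_apply] at this
    unfold dot at this
    classical
    simpa [Pi.single_apply, mul_ite, Finset.sum_ite_eq'] using this
  exact ⟨hinj, (LinearMap.injective_iff_surjective_of_finrank_eq_finrank
    (Subspace.dual_finrank_eq).symm).mp hinj⟩

lemma row_surj (g : Fin k → Fin n → ZMod p) (hgi : LinearIndependent (ZMod p) g)
    (c : Fin k → ZMod p) : ∃ v : Fin n → ZMod p, ∀ j, dot v (g j) = c j := by
  classical
  set f := (Fintype.linearCombination (ZMod p)) g with hf
  have hfapp : ∀ c : Fin k → ZMod p, f c = ∑ i, c i • g i := fun c =>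
    Fintype.linearCombination_apply _ _ _
  have hfinj : Function.Injective f := by
    intro a b hab
    apply coeff_unique g hgi
    rw [← hfapp, ← hfapp, hab]
  have hdsurj := LinearMap.dualMap_surjective_of_injective hfinj
  obtain ⟨φ, hφ⟩ := hdsurj (eDual p k c)
  obtain ⟨v, hv⟩ := (eDual_bij n).2 φ
  refine ⟨v, fun j => ?_⟩
  have h1 : g j = f (Pi.single j 1) := by
    rw [hfapp]
    symm
    simp [Pi.single_apply, ite_smul]
  have h2 : dot v (g j) = φ (g j) := by rw [← hv, eDual_apply]
  rw [h2, h1, show φ (f (Pi.single j 1)) = (f.dualMap φ) (Pi.single j 1) from rfl, hφ,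
    eDual_apply]
  unfold dot
  classical
  simp [Pi.single_apply, mul_ite, Finset.sum_ite_eq']

end Surj

section Sym
variable {p : ℕ} [Fact p.Prime] {k : ℕ}

lemma zmod2_add_self : ∀ x : ZMod 2, x + x = 0 := by decide

/-- symmetrization linear map -/
noncomputable def symMap (p k : ℕ) [Fact p.Prime] :
    (Fin k → Fin k → ZMod p) →ₗ[ZMod p] (Fin k → Fin k → ZMod p) where
  toFun X := fun i j => X i j + X j i
  map_add' X Y := by funext i j; simp only [Pi.add_apply]; ring
  map_smul' c X := by funext i j; simp only [Pi.smul_apply, smul_eq_mul, RingHom.id_apply]; ring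

lemma mem_ker_symMap {X : Fin k → Fin k → ZMod p} :
    X ∈ LinearMap.ker (symMap p k) ↔ ∀ i j, X i j + X j i = 0 := by
  rw [LinearMap.mem_ker]
  constructor
  · intro h i j
    exact congrFun (congrFun h i) j
  · intro h
    funext i j
    exact h i j

lemma two_ne_zero_zmod (hp : p ≠ 2) : (2 : ZMod p) ≠ 0 := by
  have h2 : ((2:ℕ) : ZMod p) = (2 : ZMod p) := by push_cast; ring
  rw [← h2, Ne, ZMod.natCast_eq_zero_iff]
  intro hdvd
  have := (Nat.prime_dvd_prime_iff_eq (Fact.out : p.Prime) Nat.prime_two).mp hdvd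
  exact hp this

lemma finrank_ker_symMap_odd (hp : p ≠ 2) :
    Module.finrank (ZMod p) (LinearMap.ker (symMap p k))
      = Fintype.card {q : Fin k × Fin k // q.1 < q.2} := by
  classical
  -- linear map from ker to functions on pairs
  let T0 : (Fin k → Fin k → ZMod p) →ₗ[ZMod p] ({q : Fin k × Fin k // q.1 < q.2} → ZMod p) :=
    { toFun := fun X => fun q => X q.1.1 q.1.2
      map_add' := fun X Y => rfl
      map_smul' := fun c X => rfl }
  let T := T0.comp (LinearMap.ker (symMap p k)).subtype
  have hbij : Function.Bijective T := by
    constructor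
    · rw [← LinearMap.ker_eq_bot, LinearMap.ker_eq_bot']
      intro X hX
      have hker := mem_ker_symMap.mp X.2
      apply Subtype.ext
      funext i j
      have happ : ∀ q : {q : Fin k × Fin k // q.1 < q.2}, X.1 q.1.1 q.1.2 = 0 := by
        intro q
        exact congrFun hX q
      rcases lt_trichotomy i j with h | h | h
      · exact happ ⟨(i,j), h⟩
      · subst h
        have := hker i i
        have h2 : (2 : ZMod p) * X.1 i i = 0 := by linear_combination this
        rcases mul_eq_zero.mp h2 with h3 | h3
        · exact absurd h3 (two_ne_zero_zmod hp)
        · exact h3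
      · have h1 : X.1 j i = 0 := happ ⟨(j,i), h⟩
        have := hker j i
        rw [h1, zero_add] at this
        exact this
    · intro f
      let X : Fin k → Fin k → ZMod p := fun a b =>
        if h : a < b then f ⟨(a,b), h⟩ else if h' : b < a then - f ⟨(b,a), h'⟩ else 0
      have hXmem : X ∈ LinearMap.ker (symMap p k) := by
        rw [mem_ker_symMap]
        intro i j
        rcases lt_trichotomy i j with h | h | h
        · show (if _ : i < j then _ else _) + (if _ : j < i then _ else _) = 0
          rw [dif_pos h, dif_neg (asymm h), dif_pos h]
          ring
        · subst h
          show (if _ : i < i then _ else _) + (if _ : i < i then _ else _) = 0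
          rw [dif_neg (lt_irrefl i), dif_neg (lt_irrefl i)]
          ring
        · show (if _ : i < j then _ else _) + (if _ : j < i then _ else _) = 0
          rw [dif_neg (asymm h), dif_pos h, dif_pos h]
          ring
      refine ⟨⟨X, hXmem⟩, ?_⟩
      funext q
      show (if h : q.1.1 < q.1.2 then f ⟨(q.1.1, q.1.2), h⟩ else _) = f q
      rw [dif_pos q.2]
  have := LinearEquiv.finrank_eq (LinearEquiv.ofBijective T hbij)
  rw [this, Module.finrank_fintype_fun_eq_card]

lemma finrank_ker_symMap_two (hp : p = 2) :
    Module.finrank (ZMod p) (LinearMap.ker (symMap p k))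
      = Fintype.card {q : Fin k × Fin k // q.1 ≤ q.2} := by
  classical
  subst hp
  let T0 : (Fin k → Fin k → ZMod 2) →ₗ[ZMod 2] ({q : Fin k × Fin k // q.1 ≤ q.2} → ZMod 2) :=
    { toFun := fun X => fun q => X q.1.1 q.1.2
      map_add' := fun X Y => rfl
      map_smul' := fun c X => rfl }
  let T := T0.comp (LinearMap.ker (symMap 2 k)).subtype
  have neg_self : ∀ x : ZMod 2, x + x = 0 := zmod2_add_self
  have hsym : ∀ X ∈ LinearMap.ker (symMap 2 k), ∀ i j : Fin k, X i j = X j i := by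
    intro X hX i j
    have := mem_ker_symMap.mp hX i j
    have h2 := neg_self (X j i)
    linear_combination this - h2
  have hbij : Function.Bijective T := by
    constructor
    · rw [← LinearMap.ker_eq_bot, LinearMap.ker_eq_bot']
      intro X hX
      apply Subtype.ext
      funext i j
      have happ : ∀ q : {q : Fin k × Fin k // q.1 ≤ q.2}, X.1 q.1.1 q.1.2 = 0 :=
        fun q => congrFun hX q
      rcases le_total i j with h | h
      · exact happ ⟨(i,j), h⟩
      · rw [hsym X.1 X.2 i j]
        exact happ ⟨(j,i), h⟩
    · intro f
      let X : Fin k → Fin k → ZMod 2 := fun a b =>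
        if h : a ≤ b then f ⟨(a,b), h⟩ else f ⟨(b,a), le_of_not_ge h⟩
      have hXmem : X ∈ LinearMap.ker (symMap 2 k) := by
        rw [mem_ker_symMap]
        intro i j
        have hXij : X i j = X j i := by
          show (if h : i ≤ j then _ else _) = (if h : j ≤ i then _ else _)
          rcases le_total i j with h | h
          · by_cases h' : j ≤ i
            · have : i = j := le_antisymm h h'
              subst this
              rfl
            · rw [dif_pos h, dif_neg h']
          · by_cases h' : i ≤ j
            · have : i = j := le_antisymm h' h
              subst this
              rfl
            · rw [dif_neg h', dif_pos h]
        rw [hXij]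
        exact neg_self (X j i)
      refine ⟨⟨X, hXmem⟩, ?_⟩
      funext q
      show (if h : q.1.1 ≤ q.1.2 then f ⟨(q.1.1, q.1.2), h⟩ else _) = f q
      rw [dif_pos q.2]
  have := LinearEquiv.finrank_eq (LinearEquiv.ofBijective T hbij)
  rw [this, Module.finrank_fintype_fun_eq_card]

lemma card_diag_pairs (k : ℕ) :
    (Finset.univ.filter fun q : Fin k × Fin k => q.1 = q.2).card = k := by
  classical
  have hcard : (Finset.univ.filter fun q : Fin k × Fin k => q.1 = q.2).card
      = (Finset.univ : Finset (Fin k)).card := by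
    apply Finset.card_nbij (fun q => q.1)
    · intro q _
      exact Finset.mem_univ _
    · intro q1 hq1 q2 hq2 h
      simp only [Finset.coe_filter, Set.mem_setOf_eq, Finset.mem_univ, true_and] at hq1 hq2
      have h' : q1.1 = q2.1 := h
      apply Prod.ext h'
      rw [← hq1, ← hq2]
      exact h'
    · intro i _
      refine ⟨(i,i), ?_, rfl⟩
      simp only [Finset.coe_filter, Set.mem_setOf_eq, Finset.mem_univ, true_and]
  rw [hcard, Finset.card_univ, Fintype.card_fin]

lemma card_lt_pairs (k : ℕ) :
    Fintype.card {q : Fin k × Fin k // q.1 < q.2} = k*(k-1)/2 := by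
  classical
  rw [Fintype.card_subtype]
  set a := (Finset.univ.filter fun q : Fin k × Fin k => q.1 < q.2).card with ha
  have h1 : a + (Finset.univ.filter fun q : Fin k × Fin k => ¬ q.1 < q.2).card
      = k * k := by
    rw [ha, Finset.card_filter_add_card_filter_not]
    simp [Finset.card_univ]
  have h2 : (Finset.univ.filter fun q : Fin k × Fin k => ¬ q.1 < q.2)
      = (Finset.univ.filter fun q : Fin k × Fin k => q.1 = q.2)
        ∪ (Finset.univ.filter fun q : Fin k × Fin k => q.2 < q.1) := by
    ext q
    simp only [Finset.mem_filter, Finset.mem_union, Finset.mem_univ, true_and]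
    omega
  have hdisj : Disjoint (Finset.univ.filter fun q : Fin k × Fin k => q.1 = q.2)
      (Finset.univ.filter fun q : Fin k × Fin k => q.2 < q.1) := by
    rw [Finset.disjoint_filter]
    intro q _ hq
    omega
  have h3 : (Finset.univ.filter fun q : Fin k × Fin k => q.2 < q.1).card = a := by
    rw [ha]
    apply Finset.card_nbij (fun q => (q.2, q.1))
    · intro q hq
      simp only [Finset.coe_filter, Set.mem_setOf_eq, Finset.mem_filter, Finset.mem_univ, true_and] at hq ⊢
      exact hq
    · intro q1 hq1 q2 hq2 h
      simp only [Prod.mk.injEq] at h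
      exact Prod.ext h.2 h.1
    · intro q hq
      simp only [Finset.coe_filter, Set.mem_setOf_eq, Finset.mem_univ, true_and,
        Set.mem_image] at hq ⊢
      exact ⟨(q.2, q.1), hq, rfl⟩
  have h4 := card_diag_pairs k
  have h5 : k*(k-1) + k = k*k := by
    cases k with
    | zero => rfl
    | succ m => simp [Nat.succ_sub_one]; ring
  have h6 : 2 ∣ k*(k-1) := by
    cases k with
    | zero => simp
    | succ m =>
      simpa [Nat.succ_sub_one, mul_comm] using (Nat.even_mul_succ_self m).two_dvd
  rw [h2, Finset.card_union_of_disjoint hdisj, h3, h4] at h1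
  omega

lemma card_le_pairs (k : ℕ) :
    Fintype.card {q : Fin k × Fin k // q.1 ≤ q.2} = k*(k+1)/2 := by
  classical
  rw [Fintype.card_subtype]
  have hsplit : (Finset.univ.filter fun q : Fin k × Fin k => q.1 ≤ q.2)
      = (Finset.univ.filter fun q : Fin k × Fin k => q.1 < q.2)
        ∪ (Finset.univ.filter fun q : Fin k × Fin k => q.1 = q.2) := by
    ext q
    simp only [Finset.mem_filter, Finset.mem_union, Finset.mem_univ, true_and]
    exact ⟨fun h => h.lt_or_eq, fun h => h.elim le_of_lt le_of_eq⟩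
  have hdisj : Disjoint (Finset.univ.filter fun q : Fin k × Fin k => q.1 < q.2)
      (Finset.univ.filter fun q : Fin k × Fin k => q.1 = q.2) := by
    rw [Finset.disjoint_filter]
    intro q _ hq
    exact ne_of_lt hq
  have hlt : (Finset.univ.filter fun q : Fin k × Fin k => q.1 < q.2).card = k*(k-1)/2 := by
    rw [← Fintype.card_subtype]
    exact card_lt_pairs k
  rw [hsplit, Finset.card_union_of_disjoint hdisj, hlt, card_diag_pairs]
  have hE1 : 2 ∣ k*(k-1) := by
    cases k with
    | zero => simp
    | succ m =>
      simpa [Nat.succ_sub_one, mul_comm] using (Nat.even_mul_succ_self m).two_dvd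
  have hE2 : k*(k-1) + 2*k = k*(k+1) := by
    cases k with
    | zero => rfl
    | succ m => simp [Nat.succ_sub_one]; ring
  omega

end Sym

section Count
variable {p : ℕ} [Fact p.Prime] {n k : ℕ}
variable (g : Fin k → Fin n → ZMod p)

noncomputable def PhiMap (g : Fin k → Fin n → ZMod p) :
    (Fin k → Fin n → ZMod p) →ₗ[ZMod p] (Fin k → Fin k → ZMod p) where
  toFun A := fun i j => dot (A i) (g j)
  map_add' A B := by
    funext i j
    show dot (A i + B i) (g j) = _
    rw [dot_add_left]; rfl
  map_smul' c A := by
    funext i j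
    show dot (c • A i) (g j) = _
    rw [dot_smul_left]; rfl

lemma PhiMap_surj (hgi : LinearIndependent (ZMod p) g) :
    Function.Surjective (PhiMap g) := by
  intro X
  have := fun i => row_surj g hgi (X i)
  choose v hv using this
  exact ⟨v, funext fun i => funext fun j => hv i j⟩

noncomputable def Lmap (g : Fin k → Fin n → ZMod p) :
    (Fin k → Fin n → ZMod p) →ₗ[ZMod p] (Fin k → Fin k → ZMod p) :=
  (symMap p k).comp (PhiMap g)

lemma Lmap_apply (A : Fin k → Fin n → ZMod p) (i j : Fin k) :
    Lmap g A i j = dot (A i) (g j) + dot (A j) (g i) := rfl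

lemma range_Lmap (hgi : LinearIndependent (ZMod p) g) :
    LinearMap.range (Lmap g) = LinearMap.range (symMap p k) := by
  rw [Lmap, LinearMap.range_comp, LinearMap.range_eq_top.mpr (PhiMap_surj g hgi),
    Submodule.map_top]

lemma finrank_ker_Lmap (hgi : LinearIndependent (ZMod p) g) :
    Module.finrank (ZMod p) (LinearMap.ker (Lmap g))
        + Module.finrank (ZMod p) (LinearMap.range (symMap p k)) = k * n := by
  have h1 := LinearMap.finrank_range_add_finrank_ker (Lmap g)
  rw [range_Lmap g hgi] at h1
  have h2 : Module.finrank (ZMod p) (Fin k → Fin n → ZMod p) = k * n := by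
    rw [Module.finrank_pi_fintype, Finset.sum_congr rfl
      (fun i _ => Module.finrank_fintype_fun_eq_card (ZMod p))]
    simp [Finset.card_univ, mul_comm]
  omega

lemma finrank_range_symMap :
    Module.finrank (ZMod p) (LinearMap.range (symMap p k))
        + Module.finrank (ZMod p) (LinearMap.ker (symMap p k)) = k * k := by
  have h1 := LinearMap.finrank_range_add_finrank_ker (symMap p k)
  have h2 : Module.finrank (ZMod p) (Fin k → Fin k → ZMod p) = k * k := by
    rw [Module.finrank_pi_fintype, Finset.sum_congr rfl
      (fun i _ => Module.finrank_fintype_fun_eq_card (ZMod p))]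
    simp [Finset.card_univ, mul_comm]
  omega

end Count

section Sol
variable {p : ℕ} [Fact p.Prime] {n k : ℕ}
variable (g : Fin k → Fin n → ZMod p)
variable {C1 : Submodule (ZMod p) (Fin n → ZMod p)}
  (hspan : Submodule.span (ZMod p) (Set.range g) = C1)

lemma cond_iff_Lmap (hso : sorth (C1 : Set (Fin n → ZMod p))) (A : Fin k → Fin n → ZMod p) :
    cond g hspan hso A ↔ Lmap g A = fun i j => - Smat g hspan hso i j := by
  unfold cond
  constructor
  · intro h
    funext i j
    rw [Lmap_apply]
    have := h i j
    linear_combination this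
  · intro h i j
    have := congrFun (congrFun h i) j
    rw [Lmap_apply] at this
    linear_combination this

lemma exists_sol_odd (hso : sorth (C1 : Set (Fin n → ZMod p)))
    (hgi : LinearIndependent (ZMod p) g) (hp : p ≠ 2) :
    ∃ A, cond g hspan hso A := by
  obtain ⟨A, hA⟩ := PhiMap_surj g hgi (fun i j => - ((2 : ZMod p)⁻¹ * Smat g hspan hso i j))
  refine ⟨A, ?_⟩
  intro i j
  have hij : dot (A i) (g j) = - ((2 : ZMod p)⁻¹ * Smat g hspan hso i j) :=
    congrFun (congrFun hA i) j
  have hji : dot (A j) (g i) = - ((2 : ZMod p)⁻¹ * Smat g hspan hso j i) :=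
    congrFun (congrFun hA j) i
  have hs : Smat g hspan hso i j = Smat g hspan hso j i := Smat_symm g hspan hso i j
  have h2 : (2 : ZMod p)⁻¹ * 2 = 1 := inv_mul_cancel₀ (two_ne_zero_zmod hp)
  linear_combination hij + hji + (- Smat g hspan hso i j) * h2 + ((2:ZMod p)⁻¹) * hs

lemma exists_sol_two (hso : sorth (C1 : Set (Fin n → ZMod p)))
    (hgi : LinearIndependent (ZMod p) g) (hp2 : p = 2)
    (hdiag : ∀ i, Smat g hspan hso i i = 0) :
    ∃ A, cond g hspan hso A := by
  classical
  obtain ⟨A, hA⟩ := PhiMap_surj g hgi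
    (fun i j => if j < i then Smat g hspan hso i j else 0)
  refine ⟨A, ?_⟩
  intro i j
  have hij : dot (A i) (g j) = if j < i then Smat g hspan hso i j else 0 :=
    congrFun (congrFun hA i) j
  have hji : dot (A j) (g i) = if i < j then Smat g hspan hso j i else 0 :=
    congrFun (congrFun hA j) i
  have hs : Smat g hspan hso i j = Smat g hspan hso j i := Smat_symm g hspan hso i j
  have hchar : ∀ x : ZMod p, x + x = 0 := by
    subst hp2
    exact zmod2_add_self
  rcases lt_trichotomy i j with h | h | h
  · rw [hij, hji, if_neg (asymm h), if_pos h, ← hs]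
    have := hchar (Smat g hspan hso i j)
    linear_combination this
  · subst h
    rw [hij, if_neg (lt_irrefl i), hdiag i]
    ring
  · rw [hij, hji, if_pos h, if_neg (asymm h)]
    have := hchar (Smat g hspan hso i j)
    linear_combination this

lemma zmod2_cast_sq (y : ZMod 2) :
    (ZMod.cast y : ZMod (2^2)) * (ZMod.cast y : ZMod (2^2)) = if y = 0 then 0 else 1 := by
  revert y
  decide

lemma Sii_eq_zero (hso : sorth (C1 : Set (Fin n → ZMod p))) (hp2 : p = 2)
    (hde : doublyEven (C1 : Set (Fin n → ZMod p))) (i : Fin k) :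
    Smat g hspan hso i i = 0 := by
  classical
  rw [← phi_eq_zero_iff p, ← Smat_spec g hspan hso]
  have hwt := hde (g i) (g_mem_C1 g hspan i)
  subst hp2
  unfold dot lift1
  rw [Finset.sum_congr rfl (fun t _ => zmod2_cast_sq (g i t))]
  rw [Finset.sum_ite, Finset.sum_const, Finset.sum_const, smul_zero, zero_add, nsmul_eq_mul,
    mul_one]
  have hdvd : (2^2 : ℕ) ∣ (Finset.univ.filter fun t => ¬ g i t = 0).card := by
    have h4 : (2^2 : ℕ) = 4 := by norm_num
    rw [h4]
    exact hwt
  exact (ZMod.natCast_eq_zero_iff _ _).mpr hdvd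

end Sol

section Bound
variable {p : ℕ} [Fact p.Prime] {n k : ℕ}
variable (g : Fin k → Fin n → ZMod p)
variable {C1 : Submodule (ZMod p) (Fin n → ZMod p)}
  (hspan : Submodule.span (ZMod p) (Set.range g) = C1)

noncomputable def rowMap (g : Fin k → Fin n → ZMod p) :
    (Fin n → ZMod p) →ₗ[ZMod p] (Fin k → ZMod p) where
  toFun v := fun j => dot v (g j)
  map_add' u v := by funext j; exact dot_add_left u v (g j)
  map_smul' c v := by funext j; exact dot_smul_left c v (g j)

include hspan in
lemma two_k_le_n (hso : sorth (C1 : Set (Fin n → ZMod p)))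
    (hgi : LinearIndependent (ZMod p) g) :
    k + Module.finrank (ZMod p) C1 ≤ n := by
  have hsurj : Function.Surjective (rowMap g) := by
    intro c
    obtain ⟨v, hv⟩ := row_surj g hgi c
    exact ⟨v, funext hv⟩
  have hle : C1 ≤ LinearMap.ker (rowMap g) := by
    intro x hx
    rw [LinearMap.mem_ker]
    funext j
    exact hso x hx (g j) (g_mem_C1 g hspan j)
  have h1 := LinearMap.finrank_range_add_finrank_ker (rowMap g)
  rw [LinearMap.range_eq_top.mpr hsurj, finrank_top, Module.finrank_fintype_fun_eq_card,
    Fintype.card_fin] at h1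
  have h2 : Module.finrank (ZMod p) (Fin n → ZMod p) = n := by
    rw [Module.finrank_fintype_fun_eq_card, Fintype.card_fin]
  rw [h2] at h1
  have h3 := Submodule.finrank_mono hle
  omega

end Bound

lemma pow_cancel {p x a b : ℕ} (hp : 1 < p) (h : x * p^a = p^b) :
    a ≤ b ∧ x = p^(b - a) := by
  have hdvd : p^a ∣ p^b := ⟨x, by rw [← h]; ring⟩
  have hab : a ≤ b := (Nat.pow_dvd_pow_iff_le_right hp).mp hdvd
  refine ⟨hab, ?_⟩
  have hpa : 0 < p^a := Nat.pow_pos (by omega)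
  have hx : x = p^b / p^a := by
    rw [← h, Nat.mul_div_cancel _ hpa]
  rw [hx, Nat.pow_div hab (by omega)]

section Master
variable {p : ℕ} [Fact p.Prime] {n k : ℕ}
variable (g : Fin k → Fin n → ZMod p)
variable {C1 : Submodule (ZMod p) (Fin n → ZMod p)}

lemma master (hspan : Submodule.span (ZMod p) (Set.range g) = C1)
    (hgi : LinearIndependent (ZMod p) g)
    (hso : sorth (C1 : Set (Fin n → ZMod p)))
    (A₀ : Fin k → Fin n → ZMod p) (hA₀ : cond g hspan hso A₀) :
    Set.ncard {C : Submodule (ZMod (p ^ 2)) (Fin n → ZMod (p ^ 2)) |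
        sorth (C : Set (Fin n → ZMod (p ^ 2))) ∧
        res p '' (C : Set (Fin n → ZMod (p ^ 2))) = (C1 : Set (Fin n → ZMod p)) ∧
        iot p ⁻¹' (C : Set (Fin n → ZMod (p ^ 2))) = (C1 : Set (Fin n → ZMod p))}
      * (Nat.card ↥C1) ^ k
      = p ^ (Module.finrank (ZMod p) (LinearMap.ker (Lmap g))) := by
  classical
  set 𝒮 := {C : Submodule (ZMod (p ^ 2)) (Fin n → ZMod (p ^ 2)) |
        sorth (C : Set (Fin n → ZMod (p ^ 2))) ∧
        res p '' (C : Set (Fin n → ZMod (p ^ 2))) = (C1 : Set (Fin n → ZMod p)) ∧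
        iot p ⁻¹' (C : Set (Fin n → ZMod (p ^ 2))) = (C1 : Set (Fin n → ZMod p))} with h𝒮
  set Sols : Set (Fin k → Fin n → ZMod p) := {A | cond g hspan hso A} with hSols
  set Wset : Set (Fin k → Fin n → ZMod p) := {A | ∀ i, A i ∈ C1} with hWset
  have c1 : ∀ A, cond g hspan hso A → codeOf g A ∈ 𝒮 := fun A hA =>
    ⟨(sorth_codeOf_iff g hspan hso A).mpr hA, res_image g hspan A, iot_preimage g hspan hgi A⟩
  have c2 : ∀ C ∈ 𝒮, ∃ A, cond g hspan hso A ∧ codeOf g A = C := by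
    rintro C ⟨hs, hr, ht⟩
    obtain ⟨A, hA⟩ := exists_param g hspan hgi hr ht
    exact ⟨A, (sorth_codeOf_iff g hspan hso A).mp (hA ▸ hs), hA⟩
  have c4 : ∀ A A', cond g hspan hso A → (∀ i, A' i - A i ∈ C1) → cond g hspan hso A' := by
    intro A A' hA hw i j
    have eij : dot (A' i) (g j) = dot (A i) (g j) + dot (A' i - A i) (g j) := by
      rw [← dot_add_left]
      congr 1
      abel
    have eji : dot (A' j) (g i) = dot (A j) (g i) + dot (A' j - A j) (g i) := by
      rw [← dot_add_left]
      congr 1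
      abel
    have z1 : dot (A' i - A i) (g j) = 0 := hso _ (hw i) _ (g_mem_C1 g hspan j)
    have z2 : dot (A' j - A j) (g i) = 0 := hso _ (hw j) _ (g_mem_C1 g hspan i)
    have h0 := hA i j
    linear_combination h0 + eij + eji + z1 + z2
  have hex : ∀ C : ↥𝒮, ∃ A, cond g hspan hso A ∧ codeOf g A = C.1 := fun C => c2 C.1 C.2
  choose sec hsec1 hsec2 using hex
  -- the equivalence Sols ≃ 𝒮 × Wset
  have memW : ∀ (A : ↥Sols), A.1 - sec ⟨codeOf g A.1, c1 A.1 A.2⟩ ∈ Wset := by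
    intro A
    intro i
    exact sub_mem_of_codeOf_eq g hspan hgi (hsec2 ⟨codeOf g A.1, c1 A.1 A.2⟩) i
  have memS : ∀ (Cw : ↥𝒮 × ↥Wset), sec Cw.1 + Cw.2.1 ∈ Sols := by
    intro Cw
    refine c4 (sec Cw.1) _ (hsec1 Cw.1) (fun i => ?_)
    simp only [Pi.add_apply, add_sub_cancel_left]
    exact Cw.2.2 i
  have hcode : ∀ (Cw : ↥𝒮 × ↥Wset), codeOf g (sec Cw.1 + Cw.2.1) = Cw.1.1 := by
    intro Cw
    have h := codeOf_eq_of_sub_mem g hspan (A := sec Cw.1) (A' := sec Cw.1 + Cw.2.1)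
      (fun i => by simp only [Pi.add_apply, add_sub_cancel_left]; exact Cw.2.2 i)
    rw [h, (hsec2 Cw.1)]
  let F : ↥Sols → ↥𝒮 × ↥Wset := fun A =>
    (⟨codeOf g A.1, c1 A.1 A.2⟩, ⟨A.1 - sec ⟨codeOf g A.1, c1 A.1 A.2⟩, memW A⟩)
  let G : ↥𝒮 × ↥Wset → ↥Sols := fun Cw => ⟨sec Cw.1 + Cw.2.1, memS Cw⟩
  have hGF : Function.LeftInverse G F := by
    intro A
    apply Subtype.ext
    show sec ⟨codeOf g A.1, c1 A.1 A.2⟩ + (A.1 - sec ⟨codeOf g A.1, c1 A.1 A.2⟩) = A.1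
    abel
  have hFG : Function.RightInverse G F := by
    rintro ⟨C, w⟩
    have h1 : codeOf g (sec C + w.1) = C.1 := hcode (C, w)
    have hCeq : (⟨codeOf g (sec C + w.1), c1 _ (memS (C, w))⟩ : ↥𝒮) = C := Subtype.ext h1
    apply Prod.ext
    · exact hCeq
    · apply Subtype.ext
      show (sec C + w.1) - sec ⟨codeOf g (sec C + w.1), c1 _ (memS (C, w))⟩ = w.1
      rw [hCeq]
      abel
  have hcard1 : Nat.card ↥Sols = Nat.card ↥𝒮 * Nat.card ↥Wset := by
    rw [Nat.card_congr (Equiv.mk F G hGF hFG), Nat.card_prod]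
  -- Sols ≃ ker
  have hA₀L : Lmap g A₀ = fun i j => - Smat g hspan hso i j := (cond_iff_Lmap g hspan hso A₀).mp hA₀
  let E : ↥Sols → ↥(LinearMap.ker (Lmap g)) := fun A =>
    ⟨A.1 - A₀, by
      rw [LinearMap.mem_ker, map_sub, (cond_iff_Lmap g hspan hso A.1).mp A.2, hA₀L, sub_self]⟩
  let E' : ↥(LinearMap.ker (Lmap g)) → ↥Sols := fun B =>
    ⟨B.1 + A₀, by
      have hB : Lmap g B.1 = 0 := LinearMap.mem_ker.mp B.2
      refine (cond_iff_Lmap g hspan hso _).mpr ?_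
      rw [map_add, hB, zero_add, hA₀L]⟩
  have hcard2 : Nat.card ↥Sols = Nat.card ↥(LinearMap.ker (Lmap g)) := by
    refine Nat.card_congr (Equiv.mk E E' ?_ ?_)
    · intro A
      apply Subtype.ext
      show (A.1 - A₀) + A₀ = A.1
      abel
    · intro B
      apply Subtype.ext
      show (B.1 + A₀) - A₀ = B.1
      abel
  -- Wset card
  have hW : Nat.card ↥Wset = (Nat.card ↥C1) ^ k := by
    have e : ↥Wset ≃ (Fin k → ↥C1) :=
      { toFun := fun A => fun i => ⟨A.1 i, A.2 i⟩
        invFun := fun B => ⟨fun i => (B i).1, fun i => (B i).2⟩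
        left_inv := fun A => rfl
        right_inv := fun B => rfl }
    rw [Nat.card_congr e, Nat.card_pi, Finset.prod_const, Finset.card_univ, Fintype.card_fin]
  have hker : Nat.card ↥(LinearMap.ker (Lmap g)) =
      p ^ (Module.finrank (ZMod p) (LinearMap.ker (Lmap g))) := card_eq_pow_finrank p
  have hfinal : 𝒮.ncard = Nat.card ↥𝒮 := (Nat.card_coe_set_eq 𝒮).symm
  rw [hfinal, ← hW, ← hcard1, hcard2, hker]

end Master

lemma arith_odd (k1 n fK fR N p : ℕ) (hp : 1 < p)
    (h1 : fK + fR = k1 * n)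
    (h2 : fR + k1*(k1-1)/2 = k1*k1)
    (hb : k1 + k1 ≤ n)
    (hc : N * p^(k1*k1) = p^fK) :
    N = p^(k1*(2*n-3*k1-1)/2) := by
  obtain ⟨hle, hN⟩ := pow_cancel hp hc
  rw [hN]
  congr 1
  have r4 : k1*(k1-1) + k1 = k1*k1 := by
    cases k1 with
    | zero => rfl
    | succ m => simp [Nat.succ_sub_one]; ring
  have r6 : 2 ∣ k1*(k1-1) := by
    cases k1 with
    | zero => simp
    | succ m =>
      simpa [Nat.succ_sub_one, mul_comm] using (Nat.even_mul_succ_self m).two_dvd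
  have r5 : k1*(2*n-3*k1-1) + 3*(k1*k1) + k1 = 2*(k1*n) := by
    rcases Nat.eq_zero_or_pos k1 with h0 | h0
    · subst h0; simp
    · have hx : (2*n-3*k1-1) + 3*k1 + 1 = 2*n := by omega
      calc k1*(2*n-3*k1-1) + 3*(k1*k1) + k1
          = k1*((2*n-3*k1-1) + 3*k1 + 1) := by ring
        _ = 2*(k1*n) := by rw [hx]; ring
  generalize hA1 : k1 * n = a1 at *
  generalize hA2 : k1 * k1 = a2 at *
  generalize hA3 : k1 * (k1-1) = a3 at *
  generalize hA4 : k1 * (2*n-3*k1-1) = a4 at *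
  omega

lemma arith_two (k1 n fK fR N p : ℕ) (hp : 1 < p)
    (h1 : fK + fR = k1 * n)
    (h2 : fR + k1*(k1+1)/2 = k1*k1)
    (hb : k1 + k1 ≤ n)
    (hc : N * p^(k1*k1) = p^fK) :
    N = p^(k1*(2*n-3*k1+1)/2) := by
  obtain ⟨hle, hN⟩ := pow_cancel hp hc
  rw [hN]
  congr 1
  have r4 : k1*(k1+1) = k1*k1 + k1 := by ring
  have r6 : 2 ∣ k1*(k1+1) := (Nat.even_mul_succ_self k1).two_dvd
  have r5 : k1*(2*n-3*k1+1) + 3*(k1*k1) = 2*(k1*n) + k1 := by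
    rcases Nat.eq_zero_or_pos k1 with h0 | h0
    · subst h0; simp
    · have hx : (2*n-3*k1) + 1 + 3*k1 = 2*n + 1 := by omega
      calc k1*(2*n-3*k1+1) + 3*(k1*k1)
          = k1*((2*n-3*k1) + 1 + 3*k1) := by ring
        _ = 2*(k1*n) + k1 := by rw [hx]; ring
  generalize hA1 : k1 * n = a1 at *
  generalize hA2 : k1 * k1 = a2 at *
  generalize hA3 : k1 * (k1+1) = a3 at *
  generalize hA4 : k1 * (2*n-3*k1+1) = a4 at *
  omega


/-- the number of free self-orthogonal codes `C ⊆ (Z_{p^2})^n` with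
`π(C) = ι⁻¹(C) = C₁` is `p^{k₁(2n−3k₁−1)/2}` for odd `p` and `2^{k₁(2n−3k₁+1)/2}` for `p = 2`. -/
theorem stmt5 (p n k1 : ℕ) [Fact p.Prime] (hn : 0 < n)
    (C1 : Submodule (ZMod p) (Fin n → ZMod p))
    (hso : sorth (C1 : Set (Fin n → ZMod p)))
    (hdim : Module.finrank (ZMod p) C1 = k1)
    (hde : p = 2 → doublyEven (C1 : Set (Fin n → ZMod p))) :
    {C : Submodule (ZMod (p ^ 2)) (Fin n → ZMod (p ^ 2)) |
        sorth (C : Set (Fin n → ZMod (p ^ 2))) ∧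
        res p '' (C : Set (Fin n → ZMod (p ^ 2))) = (C1 : Set (Fin n → ZMod p)) ∧
        iot p ⁻¹' (C : Set (Fin n → ZMod (p ^ 2))) = (C1 : Set (Fin n → ZMod p))}.ncard
      = if p = 2 then 2 ^ (k1 * (2 * n - 3 * k1 + 1) / 2)
        else p ^ (k1 * (2 * n - 3 * k1 - 1) / 2) := by
  classical
  let b : Module.Basis (Fin k1) (ZMod p) C1 := Module.finBasisOfFinrankEq (ZMod p) C1 hdim
  set g : Fin k1 → Fin n → ZMod p := fun i => (b i : Fin n → ZMod p) with hgdef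
  have hgi : LinearIndependent (ZMod p) g :=
    b.linearIndependent.map' C1.subtype (Submodule.ker_subtype C1)
  have hspan : Submodule.span (ZMod p) (Set.range g) = C1 := by
    have h1 : Set.range g = C1.subtype '' Set.range b := by
      rw [← Set.range_comp]; rfl
    rw [h1, Submodule.span_image, b.span_eq, Submodule.map_top, Submodule.range_subtype]
  have hC1card : Nat.card ↥C1 = p ^ k1 := by
    rw [card_eq_pow_finrank p, hdim]
  have hb2 : k1 + k1 ≤ n := by
    have := two_k_le_n g hspan hso hgi
    rwa [hdim] at this
  have h1 := finrank_ker_Lmap g hgi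
  have h2 := finrank_range_symMap (p := p) (k := k1)
  by_cases hp2 : p = 2
  · rw [if_pos hp2]
    have hdiag := fun i => Sii_eq_zero g hspan hso hp2 (hde hp2) i
    obtain ⟨A₀, hA₀⟩ := exists_sol_two g hspan hso hgi hp2 hdiag
    have hM := master g hspan hgi hso A₀ hA₀
    rw [hC1card, ← pow_mul] at hM
    rw [finrank_ker_symMap_two hp2, card_le_pairs] at h2
    have := arith_two k1 n _ _ _ p (hp1 p) h1 h2 hb2 hM
    rw [this, hp2]
  · rw [if_neg hp2]
    obtain ⟨A₀, hA₀⟩ := exists_sol_odd g hspan hso hgi hp2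
    have hM := master g hspan hgi hso A₀ hA₀
    rw [hC1card, ← pow_mul] at hM
    rw [finrank_ker_symMap_odd hp2, card_lt_pairs] at h2
    exact arith_odd k1 n _ _ _ p (hp1 p) h1 h2 hb2 hM


end Paper
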